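/- (Norm contraction of representations.) For every f ∈ L²(ℝ) and every (c, v₁, v₂) ∈ ℝ³, the functions x ↦ exp(i·a(ε)·(v₂ + ε·(v₁ − c·v₂/2)))·exp(i·b(ε)·v₂·D_ε(c)·exp(−ε·x))·f(c + x) converge, as ε → 0⁺, in the norm of L²(ℝ) to the function x ↦ exp(i·(B·v₂ + A·(v₁ + v₂·x)))·f(c + x). -/

import Mathlib

open MeasureTheory Filter Topology

/-- `D_ε(c) = (exp(−εc) − 1)/(−εc)` for `c ≠ 0`, `D_ε(0) = 1`. -/
noncomputable def Dfun (ε c : ℝ) : ℝ :=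
  if c = 0 then 1 else (Real.exp (-(ε * c)) - 1) / (-(ε * c))


open ENNReal NNReal

noncomputable def Efun (t : ℝ) : ℝ := if t = 0 then 1 else (Real.exp t - 1) / t

lemma Efun_zero : Efun 0 = 1 := by simp [Efun]

lemma hasDerivAt_Efun : HasDerivAt Efun (1/2) 0 := by
  rw [hasDerivAt_iff_tendsto_slope]
  have hbd : ∀ᶠ t : ℝ in 𝓝[≠] (0:ℝ), ‖slope Efun 0 t - 1/2‖ ≤ (2/9) * |t| := by
    filter_upwards [self_mem_nhdsWithin,
      nhdsWithin_le_nhds (Metric.ball_mem_nhds (0:ℝ) one_pos)] with t ht ht1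
    have ht0 : t ≠ 0 := ht
    have habs : |t| ≤ 1 := by
      rw [Metric.mem_ball, Real.dist_eq, sub_zero] at ht1; exact le_of_lt ht1
    have hb := Real.exp_bound habs (n := 3) (by norm_num)
    have hsum : ∑ m ∈ Finset.range 3, t ^ m / (Nat.factorial m) = 1 + t + t^2/2 := by
      norm_num [Finset.sum_range_succ]
    rw [hsum] at hb
    have : slope Efun 0 t - 1/2 = (Real.exp t - (1 + t + t^2/2)) / t^2 := by
      rw [slope_def_field, Efun, if_neg ht0, Efun_zero]
      field_simp
      ring
    rw [this, Real.norm_eq_abs, abs_div, abs_of_nonneg (by positivity : (0:ℝ) ≤ t^2),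
      div_le_iff₀ (by positivity)]
    calc |Real.exp t - (1 + t + t^2/2)| ≤ |t|^3 * ((3:ℕ).succ / ((Nat.factorial 3) * 3)) := hb
      _ = (2/9) * |t| * t^2 := by
          rw [Nat.factorial]
          norm_num
          rw [pow_succ, sq_abs]
          ring
  have h0 : Tendsto (fun t : ℝ => (2/9) * |t|) (𝓝[≠] (0:ℝ)) (𝓝 0) := by
    have : Tendsto (fun t : ℝ => (2/9) * |t|) (𝓝 (0:ℝ)) (𝓝 ((2/9) * |0|)) :=
      (continuous_const.mul (continuous_abs)).tendsto 0
    simpa using this.mono_left nhdsWithin_le_nhds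
  have := squeeze_zero_norm' hbd h0
  have h2 := this.add_const (1/2)
  simp only [sub_add_cancel, zero_add] at h2
  exact h2

noncomputable def psiFun (c x ε : ℝ) : ℝ := Efun (-(ε * c)) * Real.exp (-(ε * x))

lemma hasDerivAt_psiFun (c x : ℝ) : HasDerivAt (psiFun c x) (-(c/2) - x) 0 := by
  have h1 : HasDerivAt (fun ε : ℝ => -(ε * c)) (-c) 0 := by
    exact (((hasDerivAt_id (0:ℝ)).mul_const c).neg).congr_deriv (by simp)
  have h2 : HasDerivAt (fun ε : ℝ => Efun (-(ε * c))) ((1/2) * (-c)) 0 := by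
    have hE : HasDerivAt Efun (1/2) (-((0:ℝ) * c)) := by simpa using hasDerivAt_Efun
    exact hE.comp (0:ℝ) h1
  have h3 : HasDerivAt (fun ε : ℝ => Real.exp (-(ε * x))) (-x) 0 := by
    have hi : HasDerivAt (fun ε : ℝ => -(ε * x)) (-x) 0 := by
      exact (((hasDerivAt_id (0:ℝ)).mul_const x).neg).congr_deriv (by simp)
    have hE : HasDerivAt Real.exp (Real.exp 0) (-((0:ℝ) * x)) := by simpa using Real.hasDerivAt_exp 0
    have := hE.comp (0:ℝ) hi
    rw [Real.exp_zero, one_mul] at this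
    exact this
  have hmul := h2.mul h3
  have heqf : psiFun c x = fun ε : ℝ => Efun (-(ε * c)) * Real.exp (-(ε * x)) := rfl
  rw [heqf]
  refine hmul.congr_deriv ?_
  simp only [zero_mul, neg_zero, Real.exp_zero, Efun_zero, mul_one, one_mul]
  ring

lemma psiFun_zero (c x : ℝ) : psiFun c x 0 = 1 := by simp [psiFun, Efun_zero]

lemma tendsto_slope_psi (c x : ℝ) :
    Tendsto (fun ε : ℝ => (1 - psiFun c x ε) / ε) (𝓝[>] (0:ℝ)) (𝓝 (c/2 + x)) := by
  have h := hasDerivAt_iff_tendsto_slope.mp (hasDerivAt_psiFun c x)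
  have h' : Tendsto (slope (psiFun c x) 0) (𝓝[>] (0:ℝ)) (𝓝 (-(c/2) - x)) :=
    h.mono_left (nhdsWithin_mono _ (fun t ht => ne_of_gt ht))
  have := h'.neg
  have heq : ∀ ε : ℝ, -(slope (psiFun c x) 0 ε) = (1 - psiFun c x ε) / ε := by
    intro ε
    rw [slope_def_field, psiFun_zero]
    ring
  simp only [← heq]
  convert this using 1
  ring

lemma tendsto_psi (c x : ℝ) :
    Tendsto (psiFun c x) (𝓝[>] (0:ℝ)) (𝓝 1) := by
  have := (hasDerivAt_psiFun c x).continuousAt.tendsto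
  rw [psiFun_zero] at this
  exact this.mono_left nhdsWithin_le_nhds

lemma phase_tendsto (A B a₀ b₀ c v₁ v₂ x : ℝ) (hab : a₀ + b₀ = B) :
    Tendsto (fun ε : ℝ =>
        (a₀ + A / ε) * (v₂ + ε * (v₁ - c * v₂ / 2)) +
        (b₀ - A / ε) * v₂ * Dfun ε c * Real.exp (-(ε * x)))
      (𝓝[>] (0:ℝ)) (𝓝 (B * v₂ + A * (v₁ + v₂ * x))) := by
  have heq : ∀ᶠ ε : ℝ in 𝓝[>] (0:ℝ),
      (a₀ + A / ε) * (v₂ + ε * (v₁ - c * v₂ / 2)) +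
        (b₀ - A / ε) * v₂ * Dfun ε c * Real.exp (-(ε * x)) =
      (a₀ * v₂ + a₀ * ε * (v₁ - c * v₂ / 2) + A * (v₁ - c * v₂ / 2)
        + b₀ * v₂ * psiFun c x ε) + A * v₂ * ((1 - psiFun c x ε) / ε) := by
    filter_upwards [self_mem_nhdsWithin] with ε hε
    have hε0 : ε ≠ 0 := ne_of_gt hε
    have hD : Dfun ε c * Real.exp (-(ε * x)) = psiFun c x ε := by
      rcases eq_or_ne c 0 with hc | hc
      · simp [Dfun, psiFun, hc, Efun_zero]
      · have : -(ε * c) ≠ 0 := by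
          simp only [neg_ne_zero]; exact mul_ne_zero hε0 hc
        simp [Dfun, psiFun, hc, Efun, this]
    rw [mul_assoc ((b₀ - A / ε) * v₂), hD]
    field_simp
    ring
  rw [Filter.tendsto_congr' heq]
  have hcont : Tendsto (fun ε : ℝ => a₀ * v₂ + a₀ * ε * (v₁ - c * v₂ / 2)
      + A * (v₁ - c * v₂ / 2) + b₀ * v₂ * psiFun c x ε) (𝓝[>] (0:ℝ))
      (𝓝 (a₀ * v₂ + a₀ * 0 * (v₁ - c * v₂ / 2) + A * (v₁ - c * v₂ / 2) + b₀ * v₂ * 1)) := by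
    exact (((tendsto_const_nhds.add
      ((tendsto_const_nhds.mul (tendsto_nhdsWithin_of_tendsto_nhds tendsto_id)).mul
        tendsto_const_nhds)).add tendsto_const_nhds).add
      ((tendsto_const_nhds.mul tendsto_const_nhds).mul (tendsto_psi c x)))
  have := hcont.add ((tendsto_const_nhds.mul (tendsto_slope_psi c x)) :
    Tendsto (fun ε : ℝ => A * v₂ * ((1 - psiFun c x ε) / ε)) (𝓝[>] (0:ℝ))
      (𝓝 (A * v₂ * (c/2 + x))))
  convert this using 2
  rw [← hab]
  ring

lemma abs_exp_I_mul (r : ℝ) : ‖Complex.exp (Complex.I * (r:ℂ))‖ = 1 := by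
  rw [Complex.norm_exp]
  simp

theorem norm_contraction_of_representations
    (A B a₀ b₀ : ℝ) (hA : A ≠ 0) (hab : a₀ + b₀ = B)
    (f : Lp ℂ 2 (volume : Measure ℝ)) (c v₁ v₂ : ℝ) :
    Filter.Tendsto (fun ε : ℝ =>
        eLpNorm (fun x : ℝ =>
          Complex.exp (Complex.I * Complex.ofReal ((a₀ + A / ε) * (v₂ + ε * (v₁ - c * v₂ / 2)))) *
          Complex.exp (Complex.I * Complex.ofReal ((b₀ - A / ε) * v₂ * Dfun ε c * Real.exp (-(ε * x)))) *
          f (c + x) -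
          Complex.exp (Complex.I * Complex.ofReal (B * v₂ + A * (v₁ + v₂ * x))) * f (c + x))
        2 volume)
      (𝓝[>] (0:ℝ)) (𝓝 0) := by
  set G : ℝ → ℝ → ℂ := fun ε x =>
    Complex.exp (Complex.I * Complex.ofReal ((a₀ + A / ε) * (v₂ + ε * (v₁ - c * v₂ / 2)))) *
    Complex.exp (Complex.I * Complex.ofReal ((b₀ - A / ε) * v₂ * Dfun ε c * Real.exp (-(ε * x)))) *
    f (c + x) -
    Complex.exp (Complex.I * Complex.ofReal (B * v₂ + A * (v₁ + v₂ * x))) * f (c + x) with hG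
  -- measurability pieces
  have hfsm : StronglyMeasurable (f : ℝ → ℂ) := Lp.stronglyMeasurable f
  have hmp : MeasurePreserving (fun x : ℝ => c + x) volume volume :=
    measurePreserving_add_left volume c
  have hfc : StronglyMeasurable (fun x : ℝ => (f : ℝ → ℂ) (c + x)) :=
    hfsm.comp_measurable (measurable_const_add c)
  have hGsm : ∀ ε : ℝ, StronglyMeasurable (G ε) := by
    intro ε
    refine (((Continuous.stronglyMeasurable ?_).mul hfc).sub
      ((Continuous.stronglyMeasurable ?_).mul hfc))
    · fun_prop
    · fun_prop
  -- pointwise convergence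
  have hptw : ∀ x : ℝ, Tendsto (fun ε => G ε x) (𝓝[>] (0:ℝ)) (𝓝 0) := by
    intro x
    have h1 := phase_tendsto A B a₀ b₀ c v₁ v₂ x hab
    have hcontexp : Continuous fun r : ℝ => Complex.exp (Complex.I * (r : ℂ)) := by fun_prop
    have h2 : Tendsto (fun ε : ℝ => Complex.exp (Complex.I *
        (((a₀ + A / ε) * (v₂ + ε * (v₁ - c * v₂ / 2)) +
          (b₀ - A / ε) * v₂ * Dfun ε c * Real.exp (-(ε * x)) : ℝ) : ℂ)))
        (𝓝[>] (0:ℝ)) (𝓝 (Complex.exp (Complex.I * ((B * v₂ + A * (v₁ + v₂ * x) : ℝ) : ℂ)))) :=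
      (hcontexp.tendsto _).comp h1
    have h3 : ∀ ε : ℝ, G ε x =
        (Complex.exp (Complex.I * (((a₀ + A / ε) * (v₂ + ε * (v₁ - c * v₂ / 2)) +
          (b₀ - A / ε) * v₂ * Dfun ε c * Real.exp (-(ε * x)) : ℝ) : ℂ)) -
         Complex.exp (Complex.I * ((B * v₂ + A * (v₁ + v₂ * x) : ℝ) : ℂ))) * f (c + x) := by
      intro ε
      rw [hG]
      simp only [Complex.ofReal_add, mul_add, Complex.exp_add]
      ring
    simp only [h3]
    have := (h2.sub (tendsto_const_nhds : Tendsto (fun _ : ℝ =>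
        Complex.exp (Complex.I * ((B * v₂ + A * (v₁ + v₂ * x) : ℝ) : ℂ))) (𝓝[>] (0:ℝ))
        (𝓝 (Complex.exp (Complex.I * ((B * v₂ + A * (v₁ + v₂ * x) : ℝ) : ℂ)))))).mul_const
        ((f : ℝ → ℂ) (c + x))
    simpa using this
  -- uniform bound
  have hbound : ∀ ε : ℝ, ∀ x : ℝ, ‖G ε x‖ ≤ 2 * ‖(f : ℝ → ℂ) (c + x)‖ := by
    intro ε x
    rw [hG]
    refine (norm_sub_le _ _).trans (le_of_eq ?_)
    simp only [norm_mul, abs_exp_I_mul, one_mul]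
    ring
  -- conclude via dominated convergence for lintegral
  have hmeasf2 : Measurable fun y : ℝ => (‖(f : ℝ → ℂ) y‖₊ : ℝ≥0∞) ^ (2:ℝ) :=
    (ENNReal.continuous_rpow_const.measurable).comp hfsm.measurable.nnnorm.coe_nnreal_ennreal
  have hfin : ∫⁻ x, ((2:ℝ≥0∞) * ‖(f : ℝ → ℂ) (c + x)‖₊) ^ (2:ℝ) ∂volume ≠ ∞ := by
    have hre : ∀ x : ℝ, ((2:ℝ≥0∞) * ‖(f : ℝ → ℂ) (c + x)‖₊) ^ (2:ℝ)
        = 4 * (‖(f : ℝ → ℂ) (c + x)‖₊ : ℝ≥0∞) ^ (2:ℝ) := by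
      intro x
      rw [ENNReal.mul_rpow_of_nonneg _ _ (by norm_num : (0:ℝ) ≤ 2)]
      congr 1
      rw [show (2:ℝ) = ((2:ℕ):ℝ) by norm_num, ENNReal.rpow_natCast]
      norm_num
    simp only [hre]
    rw [lintegral_const_mul' 4 _ (by norm_num)]
    have hcomp : (∫⁻ x, (‖(f : ℝ → ℂ) (c + x)‖₊ : ℝ≥0∞) ^ (2:ℝ) ∂volume)
        = ∫⁻ y, (‖(f : ℝ → ℂ) y‖₊ : ℝ≥0∞) ^ (2:ℝ) ∂volume := hmp.lintegral_comp hmeasf2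
    rw [hcomp]
    have hlt := Lp.eLpNorm_lt_top f
    rw [eLpNorm_eq_lintegral_rpow_enorm_toReal two_ne_zero ENNReal.ofNat_ne_top] at hlt
    simp only [ENNReal.toReal_ofNat, enorm_eq_nnnorm] at hlt
    rw [ENNReal.rpow_lt_top_iff_of_pos (by norm_num : (0:ℝ) < 1/2)] at hlt
    exact ENNReal.mul_ne_top (by norm_num) hlt.ne
  have key : Tendsto (fun ε => ∫⁻ x, (‖G ε x‖₊ : ℝ≥0∞) ^ (2:ℝ) ∂volume)
      (𝓝[>] (0:ℝ)) (𝓝 (∫⁻ _x : ℝ, (0:ℝ≥0∞) ∂volume)) := by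
    refine tendsto_lintegral_filter_of_dominated_convergence
      (fun x => ((2:ℝ≥0∞) * ‖(f : ℝ → ℂ) (c + x)‖₊) ^ (2:ℝ)) ?_ ?_ hfin ?_
    · filter_upwards with ε
      exact (ENNReal.continuous_rpow_const.measurable).comp (hGsm ε).measurable.nnnorm.coe_nnreal_ennreal
    · filter_upwards with ε
      filter_upwards with x
      refine ENNReal.rpow_le_rpow ?_ (by norm_num : (0:ℝ) ≤ 2)
      have h1 : ‖G ε x‖₊ ≤ 2 * ‖(f : ℝ → ℂ) (c + x)‖₊ := by
        rw [← NNReal.coe_le_coe]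
        push_cast
        exact hbound ε x
      calc (‖G ε x‖₊ : ℝ≥0∞) ≤ ((2 * ‖(f : ℝ → ℂ) (c + x)‖₊ : ℝ≥0) : ℝ≥0∞) :=
            ENNReal.coe_le_coe.mpr h1
        _ = 2 * (‖(f : ℝ → ℂ) (c + x)‖₊ : ℝ≥0∞) := by push_cast; ring
    · filter_upwards with x
      have hc2 : Continuous fun z : ℂ => ((‖z‖₊ : ℝ≥0∞)) ^ (2:ℝ) :=
        ENNReal.continuous_rpow_const.comp (ENNReal.continuous_coe.comp continuous_nnnorm)
      have := (hc2.tendsto 0).comp (hptw x)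
      simpa [ENNReal.zero_rpow_of_pos, Function.comp_def] using this
  rw [lintegral_zero] at key
  have hrw : ∀ ε : ℝ, eLpNorm (G ε) 2 volume
      = (∫⁻ x, (‖G ε x‖₊ : ℝ≥0∞) ^ (2:ℝ) ∂volume) ^ (1/2:ℝ) := by
    intro ε
    rw [eLpNorm_eq_lintegral_rpow_enorm_toReal two_ne_zero ENNReal.ofNat_ne_top]
    simp [enorm_eq_nnnorm]
  show Tendsto (fun ε => eLpNorm (G ε) 2 volume) (𝓝[>] (0:ℝ)) (𝓝 0)
  simp only [hrw]
  have hfinal := ((ENNReal.continuous_rpow_const (y := 1/2)).tendsto 0).comp key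
  have h0 : ((0:ℝ≥0∞) ^ (1/2:ℝ)) = 0 := ENNReal.zero_rpow_of_pos (by norm_num)
  rw [h0] at hfinal
  exact hfinal
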